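/- Let n be a positive natural number and α ∈ (0,1) with ⌈(1−α)·(n+1)⌉ ≤ n. Let S₁, …, S_{n+1} be real-valued random variables on a probability space whose joint distribution is exchangeable (invariant under every permutation of the n+1 indices). Let q be the k-th smallest value among S₁, …, S_n, where k = ⌈(1−α)·(n+1)⌉. Then P(S_{n+1} ≤ q) ≥ 1 − α. -/

import Mathlib

open MeasureTheory Finset

/-- The `k`-th smallest entry (order statistic) of a finite tuple of reals,
where `i : Fin n` denotes the (0-indexed) position in the sorted order. -/
noncomputable def orderStat {n : ℕ} (f : Fin n → ℝ) (i : Fin n) : ℝ :=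
  f (Tuple.sort f i)

open ENNReal


lemma mono_char {m : ℕ} {g : Fin m → ℝ} (hg : Monotone g) (y : ℝ) (j : Fin m) :
    y ≤ g j ↔ (univ.filter fun i => g i < y).card ≤ (j : ℕ) := by
  have hio : (univ.filter fun i : Fin m => i < j) = Iio j := by
    ext i; simp
  have hic : (univ.filter fun i : Fin m => i ≤ j) = Iic j := by
    ext i; simp
  constructor
  · intro h
    have hsub : (univ.filter fun i => g i < y) ⊆ (univ.filter fun i => i < j) := by
      intro i hi
      simp only [mem_filter, mem_univ, true_and] at hi ⊢
      by_contra hij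
      exact absurd (lt_of_le_of_lt (h.trans (hg (not_lt.mp hij))) hi) (lt_irrefl _)
    calc (univ.filter fun i => g i < y).card ≤ (univ.filter fun i => i < j).card :=
          card_le_card hsub
      _ = (j : ℕ) := by rw [hio, Fin.card_Iio]
  · intro h
    by_contra hy
    push_neg at hy
    have hsub : (univ.filter fun i => i ≤ j) ⊆ (univ.filter fun i => g i < y) := by
      intro i hi
      simp only [mem_filter, mem_univ, true_and] at hi ⊢
      exact lt_of_le_of_lt (hg hi) hy
    have := card_le_card hsub
    rw [hic, Fin.card_Iic] at this
    omega

lemma card_filter_perm {m : ℕ} (σ : Equiv.Perm (Fin m)) (p : Fin m → Prop) [DecidablePred p] :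
    (univ.filter fun i => p (σ i)).card = (univ.filter p).card := by
  have : (univ.filter fun i => p (σ i)) = (univ.filter p).map σ.symm.toEmbedding := by
    ext i
    simp only [mem_filter, mem_univ, true_and, mem_map, Equiv.coe_toEmbedding]
    constructor
    · intro h; exact ⟨σ i, h, Equiv.symm_apply_apply _ _⟩
    · rintro ⟨j, hj, rfl⟩; simpa using hj
  rw [this, card_map]

lemma orderStat_char {m : ℕ} (f : Fin m → ℝ) (y : ℝ) (j : Fin m) :
    y ≤ orderStat f j ↔ (univ.filter fun i => f i < y).card ≤ (j : ℕ) := by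
  have h1 := mono_char (Tuple.monotone_sort f) y j
  simp only [Function.comp] at h1
  rw [orderStat, h1, card_filter_perm (Tuple.sort f) (fun i => f i < y)]

lemma counting {m : ℕ} (x : Fin m → ℝ) (k : ℕ) (hk1 : 1 ≤ k) (hkm : k ≤ m) :
    k ≤ (univ.filter fun j => (univ.filter fun i => x i < x j).card ≤ k - 1).card := by
  have hkm' : k - 1 < m := by omega
  set j0 : Fin m := ⟨k - 1, hkm'⟩
  have heq : (univ.filter fun j => (univ.filter fun i => x i < x j).card ≤ k - 1)
      = univ.filter fun j => x j ≤ orderStat x j0 := by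
    ext j
    simp only [mem_filter, mem_univ, true_and]
    exact (orderStat_char x (x j) j0).symm
  rw [heq]
  -- the image of {0,...,k-1} under sort is contained in this set
  have hsub : (Iic j0).map (Tuple.sort x).toEmbedding ⊆
      univ.filter fun j => x j ≤ orderStat x j0 := by
    intro j hj
    simp only [mem_map, Equiv.coe_toEmbedding, Finset.mem_Iic, mem_filter, mem_univ, true_and] at hj ⊢
    obtain ⟨i, hi, rfl⟩ := hj
    exact Tuple.monotone_sort x hi
  calc k = (Iic j0).card := by rw [Fin.card_Iic]; simp [j0]; omega
    _ = ((Iic j0).map (Tuple.sort x).toEmbedding).card := (card_map _).symm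
    _ ≤ _ := card_le_card hsub


lemma card_filter_castSucc {m : ℕ} (p : Fin (m + 1) → Prop) [DecidablePred p]
    (hlast : ¬ p (Fin.last m)) :
    (univ.filter p).card = (univ.filter fun i : Fin m => p i.castSucc).card := by
  rw [card_filter, card_filter, Fin.sum_univ_castSucc]
  simp [hlast]

theorem conformal_marginal_coverage {Ω : Type*} [MeasurableSpace Ω]
    (μ : Measure Ω) [IsProbabilityMeasure μ]
    (n : ℕ) (hn : 0 < n) (α : ℝ) (hα : α ∈ Set.Ioo (0 : ℝ) 1)
    (k : ℕ) (hk : k = ⌈(1 - α) * (n + 1 : ℝ)⌉₊) (hkn : k ≤ n)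
    (S : Fin (n + 1) → Ω → ℝ) (hS : ∀ i, Measurable (S i))
    (hexch : ∀ σ : Equiv.Perm (Fin (n + 1)),
      μ.map (fun ω => fun i => S (σ i) ω) = μ.map (fun ω => fun i => S i ω)) :
    1 - α ≤
      (μ {ω | S (Fin.last n) ω ≤
        orderStat (fun i : Fin n => S i.castSucc ω) ⟨k - 1, by omega⟩}).toReal := by
  classical
  obtain ⟨hα0, hα1⟩ := hα
  have hk1 : 1 ≤ k := by
    rw [hk]
    rw [Nat.one_le_iff_ne_zero, ← Nat.pos_iff_ne_zero, Nat.ceil_pos]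
    have h1 : (0:ℝ) < 1 - α := by linarith
    positivity
  -- the count function and target set
  set cnt : (Fin (n + 1) → ℝ) → ℕ :=
    fun x => (univ.filter fun i => x i < x (Fin.last n)).card with hcnt_def
  have hcnt_meas : Measurable cnt := by
    have : cnt = fun x => ∑ i : Fin (n + 1), if x i < x (Fin.last n) then 1 else 0 := by
      funext x; rw [hcnt_def]; exact card_filter _ _
    rw [this]
    exact Finset.measurable_sum _ fun i _ =>
      Measurable.ite (measurableSet_lt (measurable_pi_apply i) (measurable_pi_apply _))
        measurable_const measurable_const
  set T : Set (Fin (n + 1) → ℝ) := {x | cnt x ≤ k - 1} with hT_def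
  have hT_meas : MeasurableSet T := by
    have : T = cnt ⁻¹' {c | c ≤ k - 1} := rfl
    rw [this]
    exact hcnt_meas MeasurableSet.of_discrete
  -- the events B j
  set B : Fin (n + 1) → Set Ω :=
    fun j => {ω | (univ.filter fun i => S i ω < S j ω).card ≤ k - 1} with hB_def
  have hSvec : Measurable fun ω => fun i => S i ω :=
    measurable_pi_lambda _ fun i => hS i
  have hSvecσ : ∀ σ : Equiv.Perm (Fin (n + 1)),
      Measurable fun ω => fun i => S (σ i) ω :=
    fun σ => measurable_pi_lambda _ fun i => hS (σ i)
  -- each B j has measure (μ.map Svec) T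
  have hBmeas : ∀ j, μ (B j) = (μ.map (fun ω => fun i => S i ω)) T := by
    intro j
    set σ : Equiv.Perm (Fin (n + 1)) := Equiv.swap j (Fin.last n) with hσ
    have hpre : B j = (fun ω => fun i => S (σ i) ω) ⁻¹' T := by
      ext ω
      simp only [hB_def, hT_def, Set.mem_preimage, Set.mem_setOf_eq, hcnt_def]
      have h1 : (univ.filter fun i => S (σ i) ω < S j ω).card
          = (univ.filter fun i => S i ω < S j ω).card :=
        card_filter_perm σ (fun i => S i ω < S j ω)
      have h2 : σ (Fin.last n) = j := Equiv.swap_apply_right _ _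
      simp only [h2]
      rw [h1]
    rw [hpre, ← Measure.map_apply (hSvecσ σ) hT_meas, hexch σ]
  have hBmset : ∀ j, MeasurableSet (B j) := by
    intro j
    have hpre : B j = (fun ω => fun i => S i ω) ⁻¹' {x | (univ.filter fun i => x i < x j).card ≤ k - 1} := by
      ext ω; simp [hB_def]
    rw [hpre]
    apply hSvec
    have : Measurable fun x : Fin (n+1) → ℝ => (univ.filter fun i => x i < x j).card := by
      have : (fun x : Fin (n+1) → ℝ => (univ.filter fun i => x i < x j).card)
          = fun x => ∑ i : Fin (n + 1), if x i < x j then 1 else 0 := by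
        funext x; exact card_filter _ _
      rw [this]
      exact Finset.measurable_sum _ fun i _ =>
        Measurable.ite (measurableSet_lt (measurable_pi_apply i) (measurable_pi_apply _))
          measurable_const measurable_const
    have h4 : {x : Fin (n+1) → ℝ | (univ.filter fun i => x i < x j).card ≤ k - 1}
        = (fun x : Fin (n+1) → ℝ => (univ.filter fun i => x i < x j).card) ⁻¹' {c | c ≤ k - 1} := rfl
    rw [h4]
    exact this MeasurableSet.of_discrete
  -- summation bound
  have hsum : (k : ℝ≥0∞) ≤ ∑ j : Fin (n + 1), μ (B j) := by
    have h1 : ∑ j : Fin (n + 1), μ (B j)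
        = ∫⁻ ω, ∑ j : Fin (n + 1), (B j).indicator (1 : Ω → ℝ≥0∞) ω ∂μ := by
      rw [lintegral_finset_sum _ fun j _ => measurable_one.indicator (hBmset j)]
      simp_rw [lintegral_indicator_one (hBmset _)]
    have h2 : ∀ ω, (k : ℝ≥0∞) ≤ ∑ j : Fin (n + 1), (B j).indicator (1 : Ω → ℝ≥0∞) ω := by
      intro ω
      have hcount := counting (fun i => S i ω) k hk1 (by omega)
      have h3 : ∑ j : Fin (n + 1), (B j).indicator (1 : Ω → ℝ≥0∞) ω
          = ((univ.filter fun j => ω ∈ B j).card : ℝ≥0∞) := by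
        rw [card_filter]
        push_cast
        congr 1
        funext j
        simp [Set.indicator_apply]
      rw [h3]
      have : (univ.filter fun j => (univ.filter fun i => S i ω < S j ω).card ≤ k - 1)
          = (univ.filter fun j => ω ∈ B j) := by
        apply filter_congr; intro j _; simp [hB_def]
      rw [this] at hcount
      exact_mod_cast hcount
    calc (k : ℝ≥0∞) = (∫⁻ _ω, (k : ℝ≥0∞) ∂μ) := by simp
      _ ≤ _ := (lintegral_mono h2).trans_eq h1.symm
  -- so (n+1) * p ≥ k where p = measure of T
  set p : ℝ≥0∞ := (μ.map (fun ω => fun i => S i ω)) T with hp_def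
  have hsum2 : (k : ℝ≥0∞) ≤ (n + 1) * p := by
    calc (k : ℝ≥0∞) ≤ ∑ j : Fin (n + 1), μ (B j) := hsum
      _ = ∑ _j : Fin (n + 1), p := by simp_rw [hBmeas]
      _ = (n + 1) * p := by simp [mul_comm]
  have hp_le_one : p ≤ 1 := by
    rw [hp_def]
    have : IsProbabilityMeasure (μ.map (fun ω => fun i => S i ω)) :=
      Measure.isProbabilityMeasure_map hSvec.aemeasurable
    exact prob_le_one
  have hp_ne_top : p ≠ ⊤ := (hp_le_one.trans_lt ENNReal.one_lt_top).ne
  -- convert to real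
  have hreal : (k : ℝ) ≤ (n + 1) * p.toReal := by
    have := ENNReal.toReal_mono (by finiteness) hsum2
    rw [ENNReal.toReal_mul] at this
    rw [ENNReal.toReal_add (by simp) (by simp)] at this
    simpa using this
  -- identify the goal event with B (last)
  have hev : {ω | S (Fin.last n) ω ≤
      orderStat (fun i : Fin n => S i.castSucc ω) ⟨k - 1, by omega⟩} = B (Fin.last n) := by
    ext ω
    simp only [Set.mem_setOf_eq, hB_def]
    rw [orderStat_char]
    have hcast : ((⟨k - 1, by omega⟩ : Fin n) : ℕ) = k - 1 := rfl
    rw [hcast]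
    constructor <;> intro h
    · rw [card_filter_castSucc (fun i => S i ω < S (Fin.last n) ω) (lt_irrefl _)]
      exact h
    · rw [card_filter_castSucc (fun i => S i ω < S (Fin.last n) ω) (lt_irrefl _)] at h
      exact h
  rw [hev, hBmeas]
  -- final arithmetic
  have hceil : (1 - α) * (n + 1 : ℝ) ≤ k := by
    rw [hk]; exact Nat.le_ceil _
  have hnpos : (0 : ℝ) < n + 1 := by positivity
  nlinarith [hreal, hceil]
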